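/- Suppose two iteratively-defined projection maps Ψ and Ω on fermionic multiline queues (built by composing row operators Ψ^{(j)}_{Q_j} and Ω^{(j)}_{Q_j} from top row down) satisfy: (i) Ψ(Q) = Ω(Q) for all straight (partition-shape) multiline queues Q; (ii) both are invariant under every row-swap σ_i; (iii) incrementing compatibility Ψ^{(j+1)}_Q(u^{(+1)}) = (Ψ^{(j)}_Q(u))^{(+1)} and similarly for Ω. Then Ψ(Q) = Ω(Q) for all (possibly twisted) multiline queues Q, and moreover all intermediate partial compositions agree: Ψ^{(j)}_{Q_j}(⋯Ψ^{(k)}_{Q_k}(u_k)⋯) = Ω^{(j)}_{Q_j}(⋯Ω^{(k)}_{Q_k}(v_k)⋯) for all 1 ≤ j ≤ k. -/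

import Mathlib

/-- Linear bracket-matching pass.  Tokens are `(site, isOpen)`.  The second argument is the
stack of currently unmatched open brackets (most recent first), the third accumulates the
linearly unmatched closed brackets (most recent first). -/
def pairProcess {α : Type} : List (α × Bool) → List α → List α → List α × List α
  | [], opens, closes => (opens, closes)
  | (a, true) :: ts, opens, closes => pairProcess ts (a :: opens) closes
  | (a, false) :: ts, [], closes => pairProcess ts [] (a :: closes)
  | (_, false) :: ts, _ :: opens, closes => pairProcess ts opens closes

/-- The token list of `Par(A,B)`: scanning sites `j = 1, …, n` in order, record an open
bracket for `j ∈ B` (the row above) and then a closed bracket for `j ∈ A` (the row below). -/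
def parTokens {n : ℕ} (A B : Finset (Fin n)) : List (Fin n × Bool) :=
  (List.finRange n).flatMap
    (fun j => (if j ∈ B then [(j, true)] else []) ++ (if j ∈ A then [(j, false)] else []))

/-- Result of the linear pass on `Par(A,B)`. -/
def parRes {n : ℕ} (A B : Finset (Fin n)) : List (Fin n) × List (Fin n) :=
  pairProcess (parTokens A B) [] []

/-- The set of cylindrically unpaired particles of `B` (open brackets) in `Par(A,B)`:
after the linear pass, the cyclic rule additionally matches `min` many remaining opens
and closes, leaving the earliest surplus opens unmatched. -/
def unmatchedOpen {n : ℕ} (A B : Finset (Fin n)) : Finset (Fin n) :=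
  ((parRes A B).1.drop (parRes A B).2.length).toFinset

/-- The set of cylindrically unpaired particles of `A` (closed brackets) in `Par(A,B)`. -/
def unmatchedClose {n : ℕ} (A B : Finset (Fin n)) : Finset (Fin n) :=
  ((parRes A B).2.take ((parRes A B).2.length - (parRes A B).1.length)).toFinset

/-- The row-swapping involution on a pair of rows `(A, B)` (`A` below, `B` above):
all cylindrically unmatched entries of `Par(A,B)` are exchanged between the two rows. -/
def sigmaPair {n : ℕ} (A B : Finset (Fin n)) : Finset (Fin n) × Finset (Fin n) :=
  ((A \ unmatchedClose A B) ∪ unmatchedOpen A B,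
   (B \ unmatchedOpen A B) ∪ unmatchedClose A B)

/-- The involution `σ_i` acting on rows `i` and `i+1` of a multiline queue. -/
def sigmaRow {n : ℕ} (i : ℕ) (Q : ℕ → Finset (Fin n)) : ℕ → Finset (Fin n) :=
  fun j =>
    if j = i then (sigmaPair (Q i) (Q (i + 1))).1
    else if j = i + 1 then (sigmaPair (Q i) (Q (i + 1))).2
    else Q j

/-- `u^{(+1)}`: increment every nonzero entry by one. -/
def incWord {n : ℕ} (u : Fin n → ℕ) : Fin n → ℕ :=
  fun j => if u j = 0 then 0 else u j + 1

/-- `applyRows P Q k base m` applies the row operators of `P` for rows `k, k-1, …, k-m+1`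
(rows are 1-indexed): `applyRows … 0 = base` and
`applyRows … (m+1) = P^{(k-m)}_{Q (k-m)} (applyRows … m)`.  In particular
`applyRows P Q k base (k - j + 1) = P^{(j)}_{Q_j}(⋯ P^{(k)}_{Q_k}(base) ⋯)`. -/
def applyRows {n : ℕ} (P : ℕ → Finset (Fin n) → (Fin n → ℕ) → (Fin n → ℕ))
    (Q : ℕ → Finset (Fin n)) (k : ℕ) (base : Fin n → ℕ) : ℕ → (Fin n → ℕ)
  | 0 => base
  | m + 1 => P (k - m) (Q (k - m)) (applyRows P Q k base m)


lemma pairProcess_append {α : Type} (ts1 ts2 : List (α × Bool)) (o c : List α) :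
    pairProcess (ts1 ++ ts2) o c
      = pairProcess ts2 (pairProcess ts1 o c).1 (pairProcess ts1 o c).2 := by
  induction ts1 generalizing o c with
  | nil => simp [pairProcess]
  | cons t ts ih =>
    obtain ⟨a, b⟩ := t
    cases b with
    | true => simp [pairProcess, ih]
    | false =>
      cases o with
      | nil => simp [pairProcess, ih]
      | cons x o => simp [pairProcess, ih]

lemma main_inv {n : ℕ} (A B : Finset (Fin n)) :
    ∀ (l : List (Fin n)), l.Nodup → ∀ (o c : List (Fin n)),
    o.Nodup → c.Nodup →
    (∀ x ∈ o, x ∈ B ∧ x ∉ A ∧ x ∉ l) → (∀ x ∈ c, x ∈ A ∧ x ∉ B ∧ x ∉ l) →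
    (pairProcess (l.flatMap
        (fun j => (if j ∈ B then [(j, true)] else []) ++ (if j ∈ A then [(j, false)] else [])))
        o c).1.Nodup ∧
    (pairProcess (l.flatMap
        (fun j => (if j ∈ B then [(j, true)] else []) ++ (if j ∈ A then [(j, false)] else [])))
        o c).2.Nodup ∧
    (∀ x ∈ (pairProcess (l.flatMap
        (fun j => (if j ∈ B then [(j, true)] else []) ++ (if j ∈ A then [(j, false)] else [])))
        o c).1, x ∈ B ∧ x ∉ A) ∧
    (∀ x ∈ (pairProcess (l.flatMap
        (fun j => (if j ∈ B then [(j, true)] else []) ++ (if j ∈ A then [(j, false)] else [])))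
        o c).2, x ∈ A ∧ x ∉ B) ∧
    ((pairProcess (l.flatMap
        (fun j => (if j ∈ B then [(j, true)] else []) ++ (if j ∈ A then [(j, false)] else [])))
        o c).1.length : ℤ) - (pairProcess (l.flatMap
        (fun j => (if j ∈ B then [(j, true)] else []) ++ (if j ∈ A then [(j, false)] else [])))
        o c).2.length
      = (o.length : ℤ) - c.length + l.countP (fun x => decide (x ∈ B))
          - l.countP (fun x => decide (x ∈ A)) := by
  intro l
  induction l with
  | nil =>
    intro _ o c ho hc hoP hcP
    refine ⟨ho, hc, ?_, ?_, by simp [pairProcess]⟩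
    · intro x hx; exact ⟨(hoP x hx).1, (hoP x hx).2.1⟩
    · intro x hx; exact ⟨(hcP x hx).1, (hcP x hx).2.1⟩
  | cons j t ih =>
    intro hl o c ho hc hoP hcP
    have hjt : j ∉ t := (List.nodup_cons.mp hl).1
    have ht : t.Nodup := (List.nodup_cons.mp hl).2
    rw [List.flatMap_cons, pairProcess_append]
    by_cases hjB : j ∈ B <;> by_cases hjA : j ∈ A
    · -- open then close: state unchanged
      have hstep : pairProcess ((if j ∈ B then [(j, true)] else [])
          ++ (if j ∈ A then [(j, false)] else [])) o c = (o, c) := by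
        simp [hjB, hjA, pairProcess]
      rw [hstep]
      have := ih ht o c ho hc
        (fun x hx => ⟨(hoP x hx).1, (hoP x hx).2.1,
          fun h => (hoP x hx).2.2 (List.mem_cons_of_mem _ h)⟩)
        (fun x hx => ⟨(hcP x hx).1, (hcP x hx).2.1,
          fun h => (hcP x hx).2.2 (List.mem_cons_of_mem _ h)⟩)
      refine ⟨this.1, this.2.1, this.2.2.1, this.2.2.2.1, ?_⟩
      rw [this.2.2.2.2]
      simp [hjB, hjA]
      ring
    · -- open only: push j
      have hstep : pairProcess ((if j ∈ B then [(j, true)] else [])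
          ++ (if j ∈ A then [(j, false)] else [])) o c = (j :: o, c) := by
        simp [hjB, hjA, pairProcess]
      rw [hstep]
      have hjo : j ∉ o := fun h => (hoP j h).2.2 List.mem_cons_self
      have := ih ht (j :: o) c (List.nodup_cons.mpr ⟨hjo, ho⟩) hc
        (by
          intro x hx
          rcases List.mem_cons.mp hx with rfl | hx
          · exact ⟨hjB, hjA, hjt⟩
          · exact ⟨(hoP x hx).1, (hoP x hx).2.1,
              fun h => (hoP x hx).2.2 (List.mem_cons_of_mem _ h)⟩)
        (fun x hx => ⟨(hcP x hx).1, (hcP x hx).2.1,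
          fun h => (hcP x hx).2.2 (List.mem_cons_of_mem _ h)⟩)
      refine ⟨this.1, this.2.1, this.2.2.1, this.2.2.2.1, ?_⟩
      rw [this.2.2.2.2]
      simp [hjB, hjA]
      ring
    · -- close only
      cases o with
      | nil =>
        have hstep : pairProcess ((if j ∈ B then [(j, true)] else [])
            ++ (if j ∈ A then [(j, false)] else [])) [] c = ([], j :: c) := by
          simp [hjB, hjA, pairProcess]
        rw [hstep]
        have hjc : j ∉ c := fun h => (hcP j h).2.2 List.mem_cons_self
        have := ih ht [] (j :: c) List.nodup_nil (List.nodup_cons.mpr ⟨hjc, hc⟩)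
          (by intro x hx; simp at hx)
          (by
            intro x hx
            rcases List.mem_cons.mp hx with rfl | hx
            · exact ⟨hjA, hjB, hjt⟩
            · exact ⟨(hcP x hx).1, (hcP x hx).2.1,
                fun h => (hcP x hx).2.2 (List.mem_cons_of_mem _ h)⟩)
        refine ⟨this.1, this.2.1, this.2.2.1, this.2.2.2.1, ?_⟩
        rw [this.2.2.2.2]
        simp [hjB, hjA]
        ring
      | cons x o' =>
        have hstep : pairProcess ((if j ∈ B then [(j, true)] else [])
            ++ (if j ∈ A then [(j, false)] else [])) (x :: o') c = (o', c) := by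
          simp [hjB, hjA, pairProcess]
        rw [hstep]
        have ho' : o'.Nodup := (List.nodup_cons.mp ho).2
        have := ih ht o' c ho' hc
          (fun y hy => ⟨(hoP y (List.mem_cons_of_mem _ hy)).1,
            (hoP y (List.mem_cons_of_mem _ hy)).2.1,
            fun h => (hoP y (List.mem_cons_of_mem _ hy)).2.2 (List.mem_cons_of_mem _ h)⟩)
          (fun y hy => ⟨(hcP y hy).1, (hcP y hy).2.1,
            fun h => (hcP y hy).2.2 (List.mem_cons_of_mem _ h)⟩)
        refine ⟨this.1, this.2.1, this.2.2.1, this.2.2.2.1, ?_⟩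
        rw [this.2.2.2.2]
        simp [hjB, hjA]
        ring
    · -- neither
      have hstep : pairProcess ((if j ∈ B then [(j, true)] else [])
          ++ (if j ∈ A then [(j, false)] else [])) o c = (o, c) := by
        simp [hjB, hjA, pairProcess]
      rw [hstep]
      have := ih ht o c ho hc
        (fun x hx => ⟨(hoP x hx).1, (hoP x hx).2.1,
          fun h => (hoP x hx).2.2 (List.mem_cons_of_mem _ h)⟩)
        (fun x hx => ⟨(hcP x hx).1, (hcP x hx).2.1,
          fun h => (hcP x hx).2.2 (List.mem_cons_of_mem _ h)⟩)
      refine ⟨this.1, this.2.1, this.2.2.1, this.2.2.2.1, ?_⟩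
      rw [this.2.2.2.2]
      simp [hjB, hjA]

lemma countP_finRange_mem {n : ℕ} (s : Finset (Fin n)) :
    (List.finRange n).countP (fun x => decide (x ∈ s)) = s.card := by
  have h1 : ((List.finRange n).filter (fun x => decide (x ∈ s))).Nodup :=
    (List.nodup_finRange n).filter _
  have h2 : ((List.finRange n).filter (fun x => decide (x ∈ s))).toFinset = s := by
    ext x; simp
  rw [List.countP_eq_length_filter, ← List.toFinset_card_of_nodup h1, h2]

lemma parRes_spec {n : ℕ} (A B : Finset (Fin n)) :
    (parRes A B).1.Nodup ∧ (parRes A B).2.Nodup ∧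
    (∀ x ∈ (parRes A B).1, x ∈ B ∧ x ∉ A) ∧ (∀ x ∈ (parRes A B).2, x ∈ A ∧ x ∉ B) ∧
    (parRes A B).1.length + A.card = (parRes A B).2.length + B.card := by
  have h := main_inv A B (List.finRange n) (List.nodup_finRange n) [] []
    List.nodup_nil List.nodup_nil (by simp) (by simp)
  have hP : parRes A B = pairProcess ((List.finRange n).flatMap
      (fun j => (if j ∈ B then [(j, true)] else []) ++ (if j ∈ A then [(j, false)] else [])))
      [] [] := rfl
  rw [← hP] at h
  refine ⟨h.1, h.2.1, h.2.2.1, h.2.2.2.1, ?_⟩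
  have := h.2.2.2.2
  rw [countP_finRange_mem, countP_finRange_mem] at this
  simp at this
  omega

lemma sigmaPair_card_fst {n : ℕ} (A B : Finset (Fin n)) :
    (sigmaPair A B).1.card = B.card := by
  obtain ⟨ho, hc, hoP, hcP, hlen⟩ := parRes_spec A B
  set o := (parRes A B).1 with hodef
  set c := (parRes A B).2 with hcdef
  have hUo_card : (unmatchedOpen A B).card = o.length - c.length := by
    have hnd : (o.drop c.length).Nodup := ho.sublist (List.drop_sublist _ _)
    rw [unmatchedOpen, List.toFinset_card_of_nodup hnd, List.length_drop]
  have hUc_card : (unmatchedClose A B).card = c.length - o.length := by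
    have hnd : (c.take (c.length - o.length)).Nodup := hc.sublist (List.take_sublist _ _)
    rw [unmatchedClose, List.toFinset_card_of_nodup hnd, List.length_take]
    omega
  have hUo_sub : ∀ x ∈ unmatchedOpen A B, x ∈ B ∧ x ∉ A := by
    intro x hx
    rw [unmatchedOpen, List.mem_toFinset] at hx
    exact hoP x (List.mem_of_mem_drop hx)
  have hUc_sub : unmatchedClose A B ⊆ A := by
    intro x hx
    rw [unmatchedClose, List.mem_toFinset] at hx
    exact (hcP x (List.mem_of_mem_take hx)).1
  have hdisj : Disjoint (A \ unmatchedClose A B) (unmatchedOpen A B) := by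
    rw [Finset.disjoint_left]
    intro x hx hx'
    exact (hUo_sub x hx').2 (Finset.mem_sdiff.mp hx).1
  rw [sigmaPair]
  simp only
  rw [Finset.card_union_of_disjoint hdisj, Finset.card_sdiff_of_subset hUc_sub, hUo_card, hUc_card]
  omega

lemma sigmaPair_card_snd {n : ℕ} (A B : Finset (Fin n)) :
    (sigmaPair A B).2.card = A.card := by
  obtain ⟨ho, hc, hoP, hcP, hlen⟩ := parRes_spec A B
  set o := (parRes A B).1 with hodef
  set c := (parRes A B).2 with hcdef
  have hUo_card : (unmatchedOpen A B).card = o.length - c.length := by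
    have hnd : (o.drop c.length).Nodup := ho.sublist (List.drop_sublist _ _)
    rw [unmatchedOpen, List.toFinset_card_of_nodup hnd, List.length_drop]
  have hUc_card : (unmatchedClose A B).card = c.length - o.length := by
    have hnd : (c.take (c.length - o.length)).Nodup := hc.sublist (List.take_sublist _ _)
    rw [unmatchedClose, List.toFinset_card_of_nodup hnd, List.length_take]
    omega
  have hUc_sub : ∀ x ∈ unmatchedClose A B, x ∈ A ∧ x ∉ B := by
    intro x hx
    rw [unmatchedClose, List.mem_toFinset] at hx
    exact hcP x (List.mem_of_mem_take hx)
  have hUo_sub : unmatchedOpen A B ⊆ B := by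
    intro x hx
    rw [unmatchedOpen, List.mem_toFinset] at hx
    exact (hoP x (List.mem_of_mem_drop hx)).1
  have hdisj : Disjoint (B \ unmatchedOpen A B) (unmatchedClose A B) := by
    rw [Finset.disjoint_left]
    intro x hx hx'
    exact (hUc_sub x hx').2 (Finset.mem_sdiff.mp hx).1
  rw [sigmaPair]
  simp only
  rw [Finset.card_union_of_disjoint hdisj, Finset.card_sdiff_of_subset hUo_sub, hUo_card, hUc_card]
  omega

lemma sigmaRow_measure {n : ℕ} (i k : ℕ) (Q : ℕ → Finset (Fin n))
    (hi1 : 1 ≤ i) (hik : i + 1 ≤ k) :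
    (∑ j ∈ Finset.Icc 1 k, j * ((sigmaRow i Q j).card)) + (Q (i + 1)).card
      = (∑ j ∈ Finset.Icc 1 k, j * ((Q j).card)) + (Q i).card := by
  have hsub : ({i, i + 1} : Finset ℕ) ⊆ Finset.Icc 1 k := by
    intro x hx
    simp only [Finset.mem_insert, Finset.mem_singleton] at hx
    rcases hx with rfl | rfl <;> simp [Finset.mem_Icc] <;> omega
  have hne : i ≠ i + 1 := by omega
  rw [← Finset.sum_sdiff hsub, ← Finset.sum_sdiff hsub]
  have hcongr : ∑ j ∈ Finset.Icc 1 k \ {i, i + 1}, j * ((sigmaRow i Q j).card)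
      = ∑ j ∈ Finset.Icc 1 k \ {i, i + 1}, j * ((Q j).card) := by
    refine Finset.sum_congr rfl ?_
    intro j hj
    simp only [Finset.mem_sdiff, Finset.mem_insert, Finset.mem_singleton] at hj
    have h1 : j ≠ i := fun h => hj.2 (Or.inl h)
    have h2 : j ≠ i + 1 := fun h => hj.2 (Or.inr h)
    simp [sigmaRow, h1, h2]
  rw [hcongr, Finset.sum_pair hne, Finset.sum_pair hne]
  have e1 : (sigmaRow i Q i).card = (Q (i + 1)).card := by
    simp [sigmaRow, sigmaPair_card_fst]
  have e2 : (sigmaRow i Q (i + 1)).card = (Q i).card := by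
    simp [sigmaRow, hne.symm, sigmaPair_card_snd]
  rw [e1, e2]
  ring

lemma incP_iter {n : ℕ} (P : ℕ → Finset (Fin n) → (Fin n → ℕ) → (Fin n → ℕ))
    (hinc : ∀ (j : ℕ) (Q : Finset (Fin n)) (u : Fin n → ℕ),
      P (j + 1) Q (incWord u) = incWord (P j Q u)) :
    ∀ (s t : ℕ) (Q : Finset (Fin n)) (u : Fin n → ℕ),
      P (t + s) Q (incWord^[s] u) = incWord^[s] (P t Q u) := by
  intro s
  induction s with
  | zero => intro t Q u; simp
  | succ s ihs =>
    intro t Q u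
    rw [Function.iterate_succ_apply', show t + (s + 1) = (t + s) + 1 by ring, hinc,
      ihs]
    exact (Function.iterate_succ_apply' incWord s _).symm

lemma applyRows_shift {n : ℕ} (P : ℕ → Finset (Fin n) → (Fin n → ℕ) → (Fin n → ℕ))
    (hinc : ∀ (j : ℕ) (Q : Finset (Fin n)) (u : Fin n → ℕ),
      P (j + 1) Q (incWord u) = incWord (P j Q u))
    (Q : ℕ → Finset (Fin n)) (k' d : ℕ) (base : Fin n → ℕ) :
    ∀ m, m ≤ k' → applyRows P Q (k' + d) (incWord^[d] base) m
      = incWord^[d] (applyRows P (fun i => Q (i + d)) k' base m) := by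
  intro m
  induction m with
  | zero => intro _; rfl
  | succ m ihm =>
    intro hm
    have hm' : m ≤ k' := by omega
    have harith : k' + d - m = (k' - m) + d := by omega
    show P (k' + d - m) (Q (k' + d - m)) (applyRows P Q (k' + d) (incWord^[d] base) m) = _
    rw [ihm hm', harith, incP_iter P hinc d (k' - m)]
    rfl

/-- suppose two families of row operators `Ψ^{(j)}_Q` and `Ω^{(j)}_Q`
define iterative projection maps (from top row `k` down to row `1`, starting from the
base words `u_k = u_0^{(+k)}` resp. `v_k = v_0^{(+k)}`) such that
(i) the full projections agree on straight (weakly decreasing row size) multiline queues,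
(ii) both full projections are invariant under every row swap `σ_i`, and
(iii) both satisfy the increment compatibility `P^{(j+1)}_Q(u^{(+1)}) = (P^{(j)}_Q(u))^{(+1)}`.
Then the full projections agree on every (possibly twisted) multiline queue, and indeed
all intermediate partial compositions agree. -/
theorem iterative_projections_equivalent (n : ℕ)
    (Ψ Ω : ℕ → Finset (Fin n) → (Fin n → ℕ) → (Fin n → ℕ))
    (u0 v0 : Fin n → ℕ)
    (hstraight : ∀ (k : ℕ) (Q : ℕ → Finset (Fin n)),
      (∀ i, 1 ≤ i → i + 1 ≤ k → (Q (i + 1)).card ≤ (Q i).card) →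
      applyRows Ψ Q k (incWord^[k] u0) k = applyRows Ω Q k (incWord^[k] v0) k)
    (hσΨ : ∀ (k : ℕ) (Q : ℕ → Finset (Fin n)) (i : ℕ), 1 ≤ i → i + 1 ≤ k →
      applyRows Ψ (sigmaRow i Q) k (incWord^[k] u0) k = applyRows Ψ Q k (incWord^[k] u0) k)
    (hσΩ : ∀ (k : ℕ) (Q : ℕ → Finset (Fin n)) (i : ℕ), 1 ≤ i → i + 1 ≤ k →
      applyRows Ω (sigmaRow i Q) k (incWord^[k] v0) k = applyRows Ω Q k (incWord^[k] v0) k)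
    (hincΨ : ∀ (j : ℕ) (Q : Finset (Fin n)) (u : Fin n → ℕ),
      Ψ (j + 1) Q (incWord u) = incWord (Ψ j Q u))
    (hincΩ : ∀ (j : ℕ) (Q : Finset (Fin n)) (u : Fin n → ℕ),
      Ω (j + 1) Q (incWord u) = incWord (Ω j Q u)) :
    ∀ (k : ℕ) (Q : ℕ → Finset (Fin n)) (j : ℕ), 1 ≤ j → j ≤ k →
      applyRows Ψ Q k (incWord^[k] u0) (k - j + 1)
        = applyRows Ω Q k (incWord^[k] v0) (k - j + 1) := by
  -- Step 1: the full projections agree on every multiline queue.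
  have full : ∀ (k : ℕ) (Q : ℕ → Finset (Fin n)),
      applyRows Ψ Q k (incWord^[k] u0) k = applyRows Ω Q k (incWord^[k] v0) k := by
    have key : ∀ (m k : ℕ) (Q : ℕ → Finset (Fin n)),
        (∑ j ∈ Finset.Icc 1 k, j * ((Q j).card)) = m →
        applyRows Ψ Q k (incWord^[k] u0) k = applyRows Ω Q k (incWord^[k] v0) k := by
      intro m
      induction m using Nat.strong_induction_on with
      | _ m ih =>
        intro k Q hm
        by_cases hs : ∀ i, 1 ≤ i → i + 1 ≤ k → (Q (i + 1)).card ≤ (Q i).card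
        · exact hstraight k Q hs
        · push_neg at hs
          obtain ⟨i, hi1, hik, hlt⟩ := hs
          have hswap := sigmaRow_measure i k Q hi1 hik
          have hlt' : (∑ j ∈ Finset.Icc 1 k, j * ((sigmaRow i Q j).card)) < m := by omega
          have heq := ih _ hlt' k (sigmaRow i Q) rfl
          rw [hσΨ k Q i hi1 hik, hσΩ k Q i hi1 hik] at heq
          exact heq
    intro k Q
    exact key _ k Q rfl
  -- Step 2: reduce partial compositions to full ones via the shift lemma.
  intro k Q j hj1 hjk
  obtain ⟨k', d, hk, hk'⟩ : ∃ k' d, k = k' + d ∧ k - j + 1 = k' :=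
    ⟨k - j + 1, j - 1, by omega, rfl⟩
  have hbase : ∀ (w : Fin n → ℕ), incWord^[k' + d] w = incWord^[d] (incWord^[k'] w) := by
    intro w
    rw [show k' + d = d + k' by ring, Function.iterate_add_apply]
  rw [hk', hk, hbase u0, hbase v0,
    applyRows_shift Ψ hincΨ Q k' d (incWord^[k'] u0) k' le_rfl,
    applyRows_shift Ω hincΩ Q k' d (incWord^[k'] v0) k' le_rfl,
    full k' (fun i => Q (i + d))]
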